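/- Exact time-varying turnpike implies finite available storage, hence strict dissipativity (Proposition 3): In the DHN optimal control setting, let z̄ be a bounded reference pair and suppose: (i) the exact time-varying turnpike property holds at z̄, i.e., there exists ν₀ ≥ 0 such that for all x₀ ∈ X₀, all T > 0 and all optimal pairs z*_T of OCP_T(x₀): μ({τ ∈ [0,T] : z*_T(τ) ≠ z̄(τ)}) ≤ ν₀; and (ii) there exists R ≥ 0 such that ‖x*_T(τ)‖ ≤ R for all such optimal pairs, all T > 0 and all τ ∈ [0,T]. Then for every class-K function α there exists a finite constant ℓ̂ ≥ 0 such that for all x₀ ∈ X₀ the available storage satisfies S^a(x₀) ≤ ν₀ · ℓ̂ < ∞. -/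

import Mathlib

open MeasureTheory NormedSpace
open scoped Matrix

/-- The data of the district-heating-network (DHN) optimal control setting:
dynamics `ẋ = A x + B u + E d`, control constraint box
`U = ∏ᵢ [umin i, umax i]`, stage cost
`ℓ(τ,x,u) = ½ xᵀQx + uᵀSx + xᵀ r(τ) + uᵀ p(τ)`, and a compact set `X₀`
of initial conditions; `d, r, p` are measurable and bounded on `[0,∞)`. -/
structure DHNSetting (n m w : ℕ) where
  A : Matrix (Fin n) (Fin n) ℝ
  B : Matrix (Fin n) (Fin m) ℝ
  E : Matrix (Fin n) (Fin w) ℝ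
  d : ℝ → Fin w → ℝ
  d_meas : Measurable d
  d_bdd : ∃ C, ∀ τ : ℝ, 0 ≤ τ → ‖d τ‖ ≤ C
  umin : Fin m → ℝ
  umax : Fin m → ℝ
  u_lt : ∀ i, umin i < umax i
  Q : Matrix (Fin n) (Fin n) ℝ
  Q_symm : Q.IsSymm
  S : Matrix (Fin m) (Fin n) ℝ
  r : ℝ → Fin n → ℝ
  r_meas : Measurable r
  r_bdd : ∃ C, ∀ τ : ℝ, 0 ≤ τ → ‖r τ‖ ≤ C
  p : ℝ → Fin m → ℝ
  p_meas : Measurable p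
  p_bdd : ∃ C, ∀ τ : ℝ, 0 ≤ τ → ‖p τ‖ ≤ C
  X₀ : Set (Fin n → ℝ)
  X₀_compact : IsCompact X₀

namespace DHNSetting

variable {n m w : ℕ} (P : DHNSetting n m w)

/-- The control constraint box `U = ∏ᵢ [umin i, umax i] ⊂ ℝᵐ`. -/
def U : Set (Fin m → ℝ) := {u | ∀ i, u i ∈ Set.Icc (P.umin i) (P.umax i)}

/-- The stage cost `ℓ(τ,x,u) = ½ xᵀQx + uᵀSx + xᵀ r(τ) + uᵀ p(τ)`. -/
noncomputable def ell (τ : ℝ) (x : Fin n → ℝ) (u : Fin m → ℝ) : ℝ :=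
  (1 / 2) * (x ⬝ᵥ P.Q.mulVec x) + (u ⬝ᵥ P.S.mulVec x) + (x ⬝ᵥ P.r τ) + (u ⬝ᵥ P.p τ)

/-- The state trajectory of `ẋ = A x + B u + E d`, `x(0) = x₀`, given by the
variation-of-constants formula. -/
noncomputable def traj (u : ℝ → Fin m → ℝ) (x₀ : Fin n → ℝ) (t : ℝ) : Fin n → ℝ :=
  (exp (t • P.A)).mulVec x₀ +
    ∫ s in (0:ℝ)..t,
      (exp ((t - s) • P.A)).mulVec (P.B.mulVec (u s) + P.E.mulVec (P.d s))

/-- A control is admissible on `[0,T]` if it is measurable and takes values in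
`U` almost everywhere on `[0,T]`. -/
def Admissible (T : ℝ) (u : ℝ → Fin m → ℝ) : Prop :=
  Measurable u ∧ ∀ᵐ τ ∂(volume.restrict (Set.Icc (0:ℝ) T)), u τ ∈ P.U

/-- The cost functional `J_T(x₀, u) = ∫₀^T ℓ(τ, x_u(τ; x₀), u(τ)) dτ`. -/
noncomputable def cost (T : ℝ) (x₀ : Fin n → ℝ) (u : ℝ → Fin m → ℝ) : ℝ :=
  ∫ τ in (0:ℝ)..T, P.ell τ (P.traj u x₀ τ) (u τ)

/-- A control is optimal for `OCP_T(x₀)` if it is admissible and minimizes the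
cost functional over all admissible controls. -/
def IsOptimal (T : ℝ) (x₀ : Fin n → ℝ) (u : ℝ → Fin m → ℝ) : Prop :=
  P.Admissible T u ∧ ∀ u', P.Admissible T u' → P.cost T x₀ u ≤ P.cost T x₀ u'

/-- A reference pair `z̄ = (x̄, ū)` is an admissible infinite-horizon pair
satisfying the dynamics. -/
def IsReferencePair (xbar : ℝ → Fin n → ℝ) (ubar : ℝ → Fin m → ℝ) : Prop :=
  Measurable ubar ∧ (∀ τ : ℝ, 0 ≤ τ → ubar τ ∈ P.U) ∧
    ∀ t : ℝ, 0 ≤ t → xbar t = P.traj ubar (xbar 0) t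

end DHNSetting

/-- A class-K function: continuous, strictly increasing on `[0,∞)`, `α 0 = 0`. -/
def IsClassK (α : ℝ → ℝ) : Prop :=
  ContinuousOn α (Set.Ici 0) ∧ StrictMonoOn α (Set.Ici 0) ∧ α 0 = 0


private lemma abs_dot_le {k : ℕ} (v y : Fin k → ℝ) :
    |v ⬝ᵥ y| ≤ (k : ℝ) * ‖v‖ * ‖y‖ := by
  calc |v ⬝ᵥ y| ≤ ∑ i, |v i * y i| := Finset.abs_sum_le_sum_abs _ _
    _ ≤ ∑ _i : Fin k, ‖v‖ * ‖y‖ := by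
        refine Finset.sum_le_sum fun i _ => ?_
        rw [abs_mul]
        have h1 : |v i| ≤ ‖v‖ := (Real.norm_eq_abs _) ▸ norm_le_pi_norm v i
        have h2 : |y i| ≤ ‖y‖ := (Real.norm_eq_abs _) ▸ norm_le_pi_norm y i
        exact mul_le_mul h1 h2 (abs_nonneg _) (norm_nonneg _)
    _ = k * ‖v‖ * ‖y‖ := by simp [mul_assoc]

private lemma abs_dot_mulVec_le {k l : ℕ} (v : Fin k → ℝ) (M : Matrix (Fin k) (Fin l) ℝ)
    (x : Fin l → ℝ) :
    |v ⬝ᵥ M.mulVec x| ≤ (∑ i, ∑ j, |M i j|) * ‖v‖ * ‖x‖ := by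
  have hrw : v ⬝ᵥ M.mulVec x = ∑ i, ∑ j, v i * (M i j * x j) := by
    simp [dotProduct, Matrix.mulVec, Finset.mul_sum]
  rw [hrw]
  calc |∑ i, ∑ j, v i * (M i j * x j)| ≤ ∑ i, ∑ j, |v i * (M i j * x j)| :=
        (Finset.abs_sum_le_sum_abs _ _).trans
          (Finset.sum_le_sum fun i _ => Finset.abs_sum_le_sum_abs _ _)
    _ ≤ ∑ i, ∑ j, |M i j| * (‖v‖ * ‖x‖) := by
        refine Finset.sum_le_sum fun i _ => Finset.sum_le_sum fun j _ => ?_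
        have h1 : |v i| ≤ ‖v‖ := (Real.norm_eq_abs _) ▸ norm_le_pi_norm v i
        have h2 : |x j| ≤ ‖x‖ := (Real.norm_eq_abs _) ▸ norm_le_pi_norm x j
        calc |v i * (M i j * x j)| = |M i j| * (|v i| * |x j|) := by
              rw [abs_mul, abs_mul]; ring
          _ ≤ |M i j| * (‖v‖ * ‖x‖) :=
              mul_le_mul_of_nonneg_left
                (mul_le_mul h1 h2 (abs_nonneg _) (norm_nonneg _)) (abs_nonneg _)
    _ = (∑ i, ∑ j, |M i j|) * ‖v‖ * ‖x‖ := by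
        rw [mul_assoc, Finset.sum_mul]
        exact Finset.sum_congr rfl fun i _ => (Finset.sum_mul _ _ _).symm

private lemma ell_abs_le {n m w : ℕ} (P : DHNSetting n m w) (τ : ℝ) (x : Fin n → ℝ)
    (u : Fin m → ℝ) {Cx Cu Cr Cp : ℝ} (hx : ‖x‖ ≤ Cx) (hu : ‖u‖ ≤ Cu)
    (hr : ‖P.r τ‖ ≤ Cr) (hp : ‖P.p τ‖ ≤ Cp) :
    |P.ell τ x u| ≤ (1/2) * (∑ i, ∑ j, |P.Q i j|) * Cx * Cx
      + (∑ i, ∑ j, |P.S i j|) * Cu * Cx + n * Cx * Cr + m * Cu * Cp := by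
  have hCx : 0 ≤ Cx := (norm_nonneg x).trans hx
  have hCu : 0 ≤ Cu := (norm_nonneg u).trans hu
  have hCr : 0 ≤ Cr := (norm_nonneg _).trans hr
  have hCp : 0 ≤ Cp := (norm_nonneg _).trans hp
  have h1 := abs_dot_mulVec_le x P.Q x
  have h2 := abs_dot_mulVec_le u P.S x
  have h3 := abs_dot_le x (P.r τ)
  have h4 := abs_dot_le u (P.p τ)
  have KQ0 : 0 ≤ ∑ i, ∑ j, |P.Q i j| := by positivity
  have KS0 : 0 ≤ ∑ i, ∑ j, |P.S i j| := by positivity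
  have habs : |P.ell τ x u| ≤ (1/2) * |x ⬝ᵥ P.Q.mulVec x| + |u ⬝ᵥ P.S.mulVec x|
      + |x ⬝ᵥ P.r τ| + |u ⬝ᵥ P.p τ| := by
    unfold DHNSetting.ell
    calc |(1/2) * (x ⬝ᵥ P.Q.mulVec x) + (u ⬝ᵥ P.S.mulVec x) + (x ⬝ᵥ P.r τ) + (u ⬝ᵥ P.p τ)|
        ≤ |(1/2) * (x ⬝ᵥ P.Q.mulVec x) + (u ⬝ᵥ P.S.mulVec x) + (x ⬝ᵥ P.r τ)|
            + |u ⬝ᵥ P.p τ| := abs_add_le _ _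
      _ ≤ (|(1/2) * (x ⬝ᵥ P.Q.mulVec x) + (u ⬝ᵥ P.S.mulVec x)| + |x ⬝ᵥ P.r τ|)
            + |u ⬝ᵥ P.p τ| := by gcongr; exact abs_add_le _ _
      _ ≤ ((|(1/2) * (x ⬝ᵥ P.Q.mulVec x)| + |u ⬝ᵥ P.S.mulVec x|) + |x ⬝ᵥ P.r τ|)
            + |u ⬝ᵥ P.p τ| := by gcongr; exact abs_add_le _ _
      _ = (1/2) * |x ⬝ᵥ P.Q.mulVec x| + |u ⬝ᵥ P.S.mulVec x| + |x ⬝ᵥ P.r τ|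
            + |u ⬝ᵥ P.p τ| := by rw [abs_mul]; norm_num
  refine habs.trans ?_
  have e1 : (1/2) * |x ⬝ᵥ P.Q.mulVec x| ≤ (1/2) * (∑ i, ∑ j, |P.Q i j|) * Cx * Cx := by
    have : (∑ i, ∑ j, |P.Q i j|) * ‖x‖ * ‖x‖ ≤ (∑ i, ∑ j, |P.Q i j|) * Cx * Cx := by gcongr
    nlinarith [h1]
  have e2 : |u ⬝ᵥ P.S.mulVec x| ≤ (∑ i, ∑ j, |P.S i j|) * Cu * Cx :=
    h2.trans (by gcongr)
  have e3 : |x ⬝ᵥ P.r τ| ≤ (n : ℝ) * Cx * Cr := h3.trans (by gcongr)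
  have e4 : |u ⬝ᵥ P.p τ| ≤ (m : ℝ) * Cu * Cp := h4.trans (by gcongr)
  linarith

private lemma norm_mem_U_le {n m w : ℕ} (P : DHNSetting n m w) {u : Fin m → ℝ}
    (hu : u ∈ P.U) : ‖u‖ ≤ ∑ i, (|P.umin i| + |P.umax i|) := by
  have hC : 0 ≤ ∑ i, (|P.umin i| + |P.umax i|) := by positivity
  rw [pi_norm_le_iff_of_nonneg hC]
  intro i
  obtain ⟨h1, h2⟩ := hu i
  rw [Real.norm_eq_abs]
  have hi : |u i| ≤ |P.umin i| + |P.umax i| := by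
    rw [abs_le]
    constructor
    · have := neg_abs_le (P.umin i)
      have := abs_nonneg (P.umax i)
      linarith
    · have := le_abs_self (P.umax i)
      have := abs_nonneg (P.umin i)
      linarith
  exact hi.trans (Finset.single_le_sum (f := fun j => |P.umin j| + |P.umax j|)
    (fun j _ => by positivity) (Finset.mem_univ i))

set_option maxHeartbeats 2000000 in
/-- **Proposition 3: exact time-varying turnpike implies finite
available storage, hence strict dissipativity.** In the DHN optimal control
setting with bounded reference pair `z̄ = (x̄, ū)`, assume (i) the exact
time-varying turnpike property: `μ{τ ∈ [0,T] : z*_T(τ) ≠ z̄(τ)} ≤ ν₀` for all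
`x₀ ∈ X₀`, all `T > 0` and all optimal pairs; and (ii) a uniform bound
`‖x*_T(τ)‖ ≤ R` on optimal state trajectories. Then for every class-K function
`α` there is a finite `ℓ̂ ≥ 0` such that for all `x₀ ∈ X₀` the available storage
satisfies `S^a(x₀) ≤ ν₀ ℓ̂ < ∞`, i.e. every quantity
`-∫₀^T ℓ_{z̄,α}(τ, z*_T(τ)) dτ` over which the supremum in `S^a(x₀)` is taken is
bounded by `ν₀ ℓ̂`. -/
theorem exact_turnpike_implies_finite_available_storage
    {n m w : ℕ} (P : DHNSetting n m w)
    (xbar : ℝ → Fin n → ℝ) (ubar : ℝ → Fin m → ℝ)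
    (href : P.IsReferencePair xbar ubar)
    (hbar_bdd : ∃ C, ∀ τ : ℝ, 0 ≤ τ → ‖(xbar τ, ubar τ)‖ ≤ C)
    -- (i) exact time-varying turnpike property at `z̄`
    (ν₀ : ℝ) (hν₀ : 0 ≤ ν₀)
    (hexact : ∀ x₀ ∈ P.X₀, ∀ T > (0:ℝ), ∀ u, P.IsOptimal T x₀ u →
      MeasureTheory.volume
          {τ ∈ Set.Icc (0:ℝ) T | (P.traj u x₀ τ, u τ) ≠ (xbar τ, ubar τ)} ≤
        ENNReal.ofReal ν₀)
    -- (ii) uniform bound on optimal state trajectories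
    (R : ℝ) (hR : 0 ≤ R)
    (hbound : ∀ x₀ ∈ P.X₀, ∀ T > (0:ℝ), ∀ u, P.IsOptimal T x₀ u →
      ∀ τ ∈ Set.Icc (0:ℝ) T, ‖P.traj u x₀ τ‖ ≤ R) :
    ∀ α : ℝ → ℝ, IsClassK α →
      ∃ ℓhat : ℝ, 0 ≤ ℓhat ∧
        ∀ x₀ ∈ P.X₀, ∀ T : ℝ, 0 ≤ T → ∀ u, P.IsOptimal T x₀ u →
          -∫ τ in (0:ℝ)..T,
              (P.ell τ (P.traj u x₀ τ) (u τ) - P.ell τ (xbar τ) (ubar τ)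
                - α ‖(P.traj u x₀ τ - xbar τ, u τ - ubar τ)‖) ≤
            ν₀ * ℓhat := by
  intro α hα
  obtain ⟨Cb, hCb⟩ := hbar_bdd
  obtain ⟨Cr, hCr⟩ := P.r_bdd
  obtain ⟨Cp, hCp⟩ := P.p_bdd
  set Cb' := max Cb 0 with hCb'def
  set Cr' := max Cr 0 with hCr'def
  set Cp' := max Cp 0 with hCp'def
  have hCb'0 : 0 ≤ Cb' := le_max_right _ _
  have hCr'0 : 0 ≤ Cr' := le_max_right _ _
  have hCp'0 : 0 ≤ Cp' := le_max_right _ _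
  set CU := ∑ i, (|P.umin i| + |P.umax i|) with hCUdef
  have hCU0 : 0 ≤ CU := by positivity
  set KQ := ∑ i, ∑ j, |P.Q i j| with hKQdef
  set KS := ∑ i, ∑ j, |P.S i j| with hKSdef
  have hKQ0 : 0 ≤ KQ := by positivity
  have hKS0 : 0 ≤ KS := by positivity
  set ρ := R + CU + 2 * Cb' with hρdef
  have hρ0 : 0 ≤ ρ := by positivity
  set Bopt := (1/2) * KQ * R * R + KS * CU * R + n * R * Cr' + m * CU * Cp' with hBoptdef
  set Bbar := (1/2) * KQ * Cb' * Cb' + KS * Cb' * Cb' + n * Cb' * Cr' + m * Cb' * Cp'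
    with hBbardef
  have hBopt0 : 0 ≤ Bopt := by positivity
  have hBbar0 : 0 ≤ Bbar := by positivity
  set L := Bopt + Bbar + max (α ρ) 0 with hLdef
  have hL0 : 0 ≤ L := by positivity
  refine ⟨L, hL0, ?_⟩
  intro x₀ hx₀ T hT u hopt
  rcases hT.eq_or_lt with hT0 | hT0
  · rw [← hT0]
    simpa using mul_nonneg hν₀ hL0
  set x := P.traj u x₀ with hxdef
  set f : ℝ → ℝ := fun τ => P.ell τ (x τ) (u τ) - P.ell τ (xbar τ) (ubar τ)
      - α ‖(x τ - xbar τ, u τ - ubar τ)‖ with hfdef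
  have hbar_x : ∀ τ : ℝ, 0 ≤ τ → ‖xbar τ‖ ≤ Cb' := fun τ hτ =>
    ((norm_fst_le (xbar τ, ubar τ)).trans (hCb τ hτ)).trans (le_max_left _ _)
  have hbar_u : ∀ τ : ℝ, 0 ≤ τ → ‖ubar τ‖ ≤ Cb' := fun τ hτ =>
    ((norm_snd_le (xbar τ, ubar τ)).trans (hCb τ hτ)).trans (le_max_left _ _)
  have hrb : ∀ τ : ℝ, 0 ≤ τ → ‖P.r τ‖ ≤ Cr' := fun τ hτ =>
    (hCr τ hτ).trans (le_max_left _ _)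
  have hpb : ∀ τ : ℝ, 0 ≤ τ → ‖P.p τ‖ ≤ Cp' := fun τ hτ =>
    (hCp τ hτ).trans (le_max_left _ _)
  have key : ∀ τ : ℝ, 0 < τ → τ ≤ T → u τ ∈ P.U → -f τ ≤ L := by
    intro τ hτ0 hτT huU
    have hxR : ‖x τ‖ ≤ R := hbound x₀ hx₀ T hT0 u hopt τ ⟨hτ0.le, hτT⟩
    have huCU : ‖u τ‖ ≤ CU := norm_mem_U_le P huU
    have h1 : |P.ell τ (x τ) (u τ)| ≤ Bopt :=
      ell_abs_le P τ _ _ hxR huCU (hrb τ hτ0.le) (hpb τ hτ0.le)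
    have h2 : |P.ell τ (xbar τ) (ubar τ)| ≤ Bbar :=
      ell_abs_le P τ _ _ (hbar_x τ hτ0.le) (hbar_u τ hτ0.le) (hrb τ hτ0.le) (hpb τ hτ0.le)
    have hs : ‖(x τ - xbar τ, u τ - ubar τ)‖ ≤ ρ := by
      rw [Prod.norm_def]
      apply max_le
      · have := norm_sub_le (x τ) (xbar τ)
        have := hbar_x τ hτ0.le
        simp only [hρdef]; linarith
      · have := norm_sub_le (u τ) (ubar τ)
        have := hbar_u τ hτ0.le
        simp only [hρdef]; linarith
    have hαs : α ‖(x τ - xbar τ, u τ - ubar τ)‖ ≤ max (α ρ) 0 := by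
      have hmono := hα.2.1.monotoneOn
      exact (hmono (Set.mem_Ici.mpr (norm_nonneg _)) (Set.mem_Ici.mpr hρ0) hs).trans
        (le_max_left _ _)
    have h1' := abs_le.mp h1
    have h2' := abs_le.mp h2
    simp only [hfdef]
    have hLeq : L = Bopt + Bbar + max (α ρ) 0 := hLdef
    linarith [h1'.1, h2'.2]
  by_cases hint : IntervalIntegrable f volume 0 T
  · rw [show (∫ τ in (0:ℝ)..T, (P.ell τ (x τ) (u τ) - P.ell τ (xbar τ) (ubar τ)
        - α ‖(x τ - xbar τ, u τ - ubar τ)‖)) = ∫ τ in (0:ℝ)..T, f τ from rfl,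
      intervalIntegral.integral_of_le hT]
    have hIoc : IntegrableOn f (Set.Ioc 0 T) volume := hint.1
    set μ := volume.restrict (Set.Ioc (0:ℝ) T) with hμdef
    set g : ℝ → ℝ := fun τ => max (-f τ) 0 with hgdef
    have hg_meas : AEStronglyMeasurable g μ := by
      have : AEStronglyMeasurable (fun τ => -f τ) μ := hIoc.aestronglyMeasurable.neg
      exact this.sup aestronglyMeasurable_const
    have hg_int : Integrable g μ := by
      refine hIoc.abs.mono hg_meas (Filter.Eventually.of_forall fun τ => ?_)
      rw [Real.norm_eq_abs, Real.norm_eq_abs, hgdef]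
      rw [abs_of_nonneg (le_max_right _ _), abs_abs]
      exact max_le (neg_le_abs _) (abs_nonneg _)
    have step1 : -∫ τ, f τ ∂μ ≤ ∫ τ, g τ ∂μ := by
      rw [← integral_neg]
      exact integral_mono hIoc.neg hg_int fun τ => le_max_left _ _
    refine step1.trans ?_
    have step2 : ∫ τ, g τ ∂μ = (∫⁻ τ, ENNReal.ofReal (g τ) ∂μ).toReal :=
      integral_eq_lintegral_of_nonneg_ae (Filter.Eventually.of_forall fun τ =>
        le_max_right _ _) hg_meas
    rw [step2]
    have hSbad := hexact x₀ hx₀ T hT0 u hopt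
    set Sbad := {τ ∈ Set.Icc (0:ℝ) T | (x τ, u τ) ≠ (xbar τ, ubar τ)} with hSbaddef
    have hae : ∀ᵐ τ ∂μ, ENNReal.ofReal (g τ) ≤
        Sbad.indicator (fun _ => ENNReal.ofReal L) τ := by
      have h1 : ∀ᵐ τ ∂μ, τ ∈ Set.Ioc (0:ℝ) T := ae_restrict_mem measurableSet_Ioc
      have h2 : ∀ᵐ τ ∂μ, u τ ∈ P.U :=
        ae_restrict_of_ae_restrict_of_subset Set.Ioc_subset_Icc_self hopt.1.2
      filter_upwards [h1, h2] with τ hτ huU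
      by_cases hz : (x τ, u τ) = (xbar τ, ubar τ)
      · have hx_eq : x τ = xbar τ := congrArg Prod.fst hz
        have hu_eq : u τ = ubar τ := congrArg Prod.snd hz
        have hf0 : f τ = 0 := by
          simp only [hfdef, hx_eq, hu_eq, sub_self]
          have : ‖((0 : Fin n → ℝ), (0 : Fin m → ℝ))‖ = 0 := by simp
          rw [this, hα.2.2]
          ring
        have hg0 : g τ = 0 := by simp [hgdef, hf0]
        simp [hg0]
      · have hmem : τ ∈ Sbad := ⟨Set.Ioc_subset_Icc_self hτ, hz⟩
        rw [Set.indicator_of_mem hmem]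
        exact ENNReal.ofReal_le_ofReal (max_le (key τ hτ.1 hτ.2 huU) hL0)
    have hlin : ∫⁻ τ, ENNReal.ofReal (g τ) ∂μ ≤ ENNReal.ofReal (ν₀ * L) := by
      calc ∫⁻ τ, ENNReal.ofReal (g τ) ∂μ
          ≤ ∫⁻ τ, Sbad.indicator (fun _ => ENNReal.ofReal L) τ ∂μ := lintegral_mono_ae hae
        _ ≤ ENNReal.ofReal L * μ Sbad := lintegral_indicator_const_le _ _
        _ ≤ ENNReal.ofReal L * ENNReal.ofReal ν₀ := by
            gcongr
            exact (Measure.restrict_apply_le _ _).trans hSbad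
        _ = ENNReal.ofReal (ν₀ * L) := by
            rw [← ENNReal.ofReal_mul hL0, mul_comm]
    exact ENNReal.toReal_le_of_le_ofReal (mul_nonneg hν₀ hL0) hlin
  · rw [show (∫ τ in (0:ℝ)..T, (P.ell τ (x τ) (u τ) - P.ell τ (xbar τ) (ubar τ)
        - α ‖(x τ - xbar τ, u τ - ubar τ)‖)) = ∫ τ in (0:ℝ)..T, f τ from rfl,
      intervalIntegral.integral_undef hint]
    simpa using mul_nonneg hν₀ hL0
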